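/- Let Δ be a modulus of continuity, M > 0, N a positive integer, and g : [−M,M]^d → ℝ^p a function admitting Δ as a modulus of continuity. Define ĝ(y) := Σ_{n ∈ {−N,…,N}^d} g(Mn/N) φ(Ny/M − n), where φ(z) = max{1 + min{z₁,…,z_d,0} − max{z₁,…,z_d,0}, 0}. Then ‖ĝ(y) − g(y)‖₂ ≤ Δ(M√d/N) for all y ∈ [−M,M]^d. -/

import Mathlib

/-- The "spike" function φ(z) = max{1 + min{z₁,…,z_d,0} − max{z₁,…,z_d,0}, 0},
where the min and max are taken over the coordinates of `z` together with `0`. -/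
noncomputable def spike (d : ℕ) (z : Fin d → ℝ) : ℝ :=
  max (1 + Finset.univ.inf' Finset.univ_nonempty (fun o : Option (Fin d) => o.elim 0 z)
        - Finset.univ.sup' Finset.univ_nonempty (fun o : Option (Fin d) => o.elim 0 z)) 0


open MeasureTheory

lemma my_sup'_neg {α : Type*} (s : Finset α) (hs : s.Nonempty) (f : α → ℝ) :
    s.sup' hs (fun a => - f a) = - s.inf' hs f := by
  apply le_antisymm
  · exact Finset.sup'_le _ _ fun a ha => neg_le_neg (Finset.inf'_le _ ha)
  · obtain ⟨a, ha, he⟩ := s.exists_mem_eq_inf' hs f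
    rw [he]
    exact Finset.le_sup' (fun a => - f a) ha

lemma my_inf'_add {α : Type*} (s : Finset α) (hs : s.Nonempty) (f : α → ℝ) (c : ℝ) :
    s.inf' hs (fun a => c + f a) = c + s.inf' hs f := by
  apply le_antisymm
  · obtain ⟨a, ha, he⟩ := s.exists_mem_eq_inf' hs f
    rw [he]
    exact Finset.inf'_le (fun a => c + f a) ha
  · exact Finset.le_inf' _ _ fun a ha => (add_le_add_iff_left c).mpr (Finset.inf'_le _ ha)

lemma my_inf'_neg {α : Type*} (s : Finset α) (hs : s.Nonempty) (f : α → ℝ) :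
    s.inf' hs (fun a => - f a) = - s.sup' hs f := by
  have := my_sup'_neg s hs (fun a => - f a)
  simp only [neg_neg] at this
  rw [this, neg_neg]

lemma spike_nonneg (d : ℕ) (z : Fin d → ℝ) : 0 ≤ spike d z := le_max_right _ _

lemma spike_eq_zero (d : ℕ) (z : Fin d → ℝ) (i : Fin d) (h : 1 ≤ |z i|) : spike d z = 0 := by
  have hinf0 : Finset.univ.inf' Finset.univ_nonempty (fun o : Option (Fin d) => o.elim 0 z) ≤ 0 :=
    Finset.inf'_le _ (Finset.mem_univ (none : Option (Fin d)))
  have hsup0 : (0:ℝ) ≤ Finset.univ.sup' Finset.univ_nonempty (fun o : Option (Fin d) => o.elim 0 z) :=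
    Finset.le_sup' (fun o : Option (Fin d) => o.elim 0 z) (Finset.mem_univ (none : Option (Fin d)))
  have hinfi : Finset.univ.inf' Finset.univ_nonempty (fun o : Option (Fin d) => o.elim 0 z) ≤ z i :=
    Finset.inf'_le _ (Finset.mem_univ (some i))
  have hsupi : z i ≤ Finset.univ.sup' Finset.univ_nonempty (fun o : Option (Fin d) => o.elim 0 z) :=
    Finset.le_sup' (fun o : Option (Fin d) => o.elim 0 z) (Finset.mem_univ (some i))
  rw [spike, max_eq_right]
  rcases abs_cases (z i) with ⟨he, _⟩ | ⟨he, _⟩ <;> rw [he] at h <;> linarith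

lemma spike_partition (d N : ℕ) (z : Fin d → ℝ) (hz : ∀ i, |z i| ≤ N) :
    ∑ n ∈ Fintype.piFinset (fun _ : Fin d => Finset.Icc (-(N:ℤ)) (N:ℤ)),
      spike d (fun i => z i - n i) = 1 := by
  classical
  set grid := Fintype.piFinset (fun _ : Fin d => Finset.Icc (-(N:ℤ)) (N:ℤ)) with hgrid
  set L : (Fin d → ℤ) → ℝ := fun n => Finset.univ.sup' Finset.univ_nonempty
      (fun o : Option (Fin d) => o.elim 0 (fun i => (n i : ℝ) - z i)) with hL
  set U : (Fin d → ℤ) → ℝ := fun n => Finset.univ.inf' Finset.univ_nonempty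
      (fun o : Option (Fin d) => o.elim 1 (fun i => (n i : ℝ) + 1 - z i)) with hU
  have mem_A : ∀ (n : Fin d → ℤ) (t : ℝ),
      t ∈ Set.Ico (L n) (U n) ↔ (0 ≤ t ∧ t < 1) ∧
        ∀ i, (n i : ℝ) ≤ z i + t ∧ z i + t < (n i : ℝ) + 1 := by
    intro n t
    simp only [Set.mem_Ico, hL, hU, Finset.sup'_le_iff, Finset.lt_inf'_iff, Finset.mem_univ,
      forall_true_left, Option.forall, Option.elim]
    constructor
    · rintro ⟨⟨h0, hn⟩, h1, hm⟩
      exact ⟨⟨h0, h1⟩, fun i => ⟨by linarith [hn i], by linarith [hm i]⟩⟩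
    · rintro ⟨⟨h0, h1⟩, h⟩
      exact ⟨⟨h0, fun i => by linarith [(h i).1]⟩, h1, fun i => by linarith [(h i).2]⟩
  -- spike value equals the length of the interval
  have spike_val : ∀ n : Fin d → ℤ,
      spike d (fun i => z i - n i) = (volume (Set.Ico (L n) (U n))).toReal := by
    intro n
    rw [Real.volume_Ico, ENNReal.toReal_ofReal']
    have e1 : (fun o : Option (Fin d) => o.elim 0 (fun i => (n i : ℝ) - z i))
        = fun o : Option (Fin d) => - (o.elim 0 (fun i => z i - (n i : ℝ))) := by
      funext o; cases o <;> simp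
    have e2 : (fun o : Option (Fin d) => o.elim 1 (fun i => (n i : ℝ) + 1 - z i))
        = fun o : Option (Fin d) => 1 + - (o.elim 0 (fun i => z i - (n i : ℝ))) := by
      funext o; cases o <;> simp <;> ring
    have hLn : L n = - Finset.univ.inf' Finset.univ_nonempty
        (fun o : Option (Fin d) => o.elim 0 (fun i => z i - (n i : ℝ))) := by
      simp only [hL, e1]
      exact my_sup'_neg _ _ _
    have hUn : U n = 1 - Finset.univ.sup' Finset.univ_nonempty
        (fun o : Option (Fin d) => o.elim 0 (fun i => z i - (n i : ℝ))) := by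
      simp only [hU, e2]
      rw [my_inf'_add, my_inf'_neg]
      ring
    rw [spike, hLn, hUn]
    congr 1
    ring
  have hdisj : (grid : Set (Fin d → ℤ)).PairwiseDisjoint (fun n => Set.Ico (L n) (U n)) := by
    intro n _ m _ hnm
    rw [Function.onFun, Set.disjoint_left]
    intro t htn htm
    apply hnm
    funext i
    obtain ⟨-, hn⟩ := (mem_A n t).mp htn
    obtain ⟨-, hm⟩ := (mem_A m t).mp htm
    have h1 := (hn i).1; have h2 := (hn i).2
    have h3 := (hm i).1; have h4 := (hm i).2
    have : (n i : ℝ) < m i + 1 := by linarith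
    have h5 : n i ≤ m i := by exact_mod_cast Int.lt_add_one_iff.mp (by exact_mod_cast this)
    have : (m i : ℝ) < n i + 1 := by linarith
    have h6 : m i ≤ n i := by exact_mod_cast Int.lt_add_one_iff.mp (by exact_mod_cast this)
    omega
  have hcover : (⋃ n ∈ grid, Set.Ico (L n) (U n)) = Set.Ico (0:ℝ) 1 := by
    apply Set.Subset.antisymm
    · intro t ht
      simp only [Set.mem_iUnion] at ht
      obtain ⟨n, _, htn⟩ := ht
      exact Set.mem_Ico.mpr ((mem_A n t).mp htn).1
    · intro t ht
      obtain ⟨h0, h1⟩ := Set.mem_Ico.mp ht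
      have hmem : (fun i => ⌊z i + t⌋) ∈ grid := by
        rw [hgrid, Fintype.mem_piFinset]
        intro i
        rw [Finset.mem_Icc]
        constructor
        · rw [Int.le_floor]
          push_cast
          linarith [abs_le.mp (hz i)]
        · rw [← Int.lt_add_one_iff, Int.floor_lt]
          push_cast
          linarith [abs_le.mp (hz i)]
      have hmem2 : t ∈ Set.Ico (L fun i => ⌊z i + t⌋) (U fun i => ⌊z i + t⌋) := by
        rw [mem_A]
        exact ⟨⟨h0, h1⟩, fun i => ⟨Int.floor_le _, Int.lt_floor_add_one _⟩⟩
      exact Set.mem_biUnion hmem hmem2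
  have hmeas : ∀ n ∈ grid, MeasurableSet (Set.Ico (L n) (U n)) := fun n _ => measurableSet_Ico
  calc ∑ n ∈ grid, spike d (fun i => z i - n i)
      = ∑ n ∈ grid, (volume (Set.Ico (L n) (U n))).toReal := by
        exact Finset.sum_congr rfl fun n _ => spike_val n
    _ = (∑ n ∈ grid, volume (Set.Ico (L n) (U n))).toReal := by
        rw [ENNReal.toReal_sum]
        intro n _
        rw [Real.volume_Ico]
        exact ENNReal.ofReal_ne_top
    _ = (volume (⋃ n ∈ grid, Set.Ico (L n) (U n))).toReal := by
        rw [measure_biUnion_finset hdisj hmeas]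
    _ = 1 := by rw [hcover, Real.volume_Ico]; norm_num

theorem stmt_13 (d p N : ℕ) (hN : 0 < N) (M : ℝ) (hM : 0 < M)
    (Δ : ℝ → ℝ) (hΔmono : MonotoneOn Δ (Set.Ici 0)) (hΔ0 : Δ 0 = 0)
    (hΔlim : Filter.Tendsto Δ (nhdsWithin 0 (Set.Ioi 0)) (nhds 0))
    (g : EuclideanSpace ℝ (Fin d) → EuclideanSpace ℝ (Fin p))
    (hg : ∀ y : EuclideanSpace ℝ (Fin d), (∀ i, |y i| ≤ M) →
      ∀ y' : EuclideanSpace ℝ (Fin d), (∀ i, |y' i| ≤ M) → ‖g y - g y'‖ ≤ Δ ‖y - y'‖)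
    (y : EuclideanSpace ℝ (Fin d)) (hy : ∀ i, |y i| ≤ M) :
    ‖(∑ n ∈ Fintype.piFinset (fun _ : Fin d => Finset.Icc (-(N : ℤ)) (N : ℤ)),
        spike d (fun i => N * y i / M - (n i : ℝ)) •
          g (WithLp.toLp 2 (fun i => M * (n i : ℝ) / N))) - g y‖ ≤ Δ (M * Real.sqrt d / N) := by
  classical
  have hNR : (0:ℝ) < N := by exact_mod_cast hN
  set grid := Fintype.piFinset (fun _ : Fin d => Finset.Icc (-(N : ℤ)) (N : ℤ)) with hgrid
  set s : (Fin d → ℤ) → ℝ := fun n => spike d (fun i => N * y i / M - (n i : ℝ)) with hs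
  have hzb : ∀ i, |(N:ℝ) * y i / M| ≤ (N:ℝ) := by
    intro i
    rw [abs_div, abs_mul, abs_of_pos hM, Nat.abs_cast, div_le_iff₀ hM]
    exact mul_le_mul_of_nonneg_left (hy i) (Nat.cast_nonneg N)
  have hsum : ∑ n ∈ grid, s n = 1 := spike_partition d N (fun i => N * y i / M) hzb
  set c := Δ (M * Real.sqrt d / N) with hc
  have hcnn : (0:ℝ) ≤ M * Real.sqrt d / N :=
    div_nonneg (mul_nonneg hM.le (Real.sqrt_nonneg _)) hNR.le
  -- rewrite the difference
  have key : (∑ n ∈ grid, s n • g (WithLp.toLp 2 (fun i => M * (n i : ℝ) / N))) - g y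
      = ∑ n ∈ grid, s n • (g (WithLp.toLp 2 (fun i => M * (n i : ℝ) / N)) - g y) := by
    rw [Finset.sum_congr rfl (fun n _ => smul_sub (s n) _ (g y)), Finset.sum_sub_distrib,
      ← Finset.sum_smul, hsum, one_smul]
  rw [key]
  calc ‖∑ n ∈ grid, s n • (g (WithLp.toLp 2 (fun i => M * (n i : ℝ) / N)) - g y)‖
      ≤ ∑ n ∈ grid, ‖s n • (g (WithLp.toLp 2 (fun i => M * (n i : ℝ) / N)) - g y)‖ := norm_sum_le _ _
    _ = ∑ n ∈ grid, s n * ‖g (WithLp.toLp 2 (fun i => M * (n i : ℝ) / N)) - g y‖ := by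
        refine Finset.sum_congr rfl fun n _ => ?_
        rw [norm_smul, Real.norm_eq_abs, abs_of_nonneg (spike_nonneg _ _)]
    _ ≤ ∑ n ∈ grid, s n * c := by
        refine Finset.sum_le_sum fun n hn => ?_
        rcases eq_or_lt_of_le (spike_nonneg d (fun i => N * y i / M - (n i : ℝ))) with h0 | h0
        · simp [hs, ← h0]
        · refine mul_le_mul_of_nonneg_left ?_ h0.le
          set v : EuclideanSpace ℝ (Fin d) := WithLp.toLp 2 (fun i => M * (n i : ℝ) / N) with hv
          have hvi : ∀ i, v i = M * (n i : ℝ) / N := fun i => rfl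
          have hvyi : ∀ i, (v - y) i = M * (n i : ℝ) / N - y i := fun i => rfl
          have hlt : ∀ i, |(N:ℝ) * y i / M - (n i : ℝ)| < 1 := by
            intro i
            by_contra hcon
            push_neg at hcon
            exact absurd (spike_eq_zero d _ i hcon) (ne_of_gt h0)
          have hnb : ∀ i, |(n i : ℤ)| ≤ (N:ℤ) := by
            intro i
            have := (Fintype.mem_piFinset.mp hn) i
            rw [Finset.mem_Icc] at this
            exact abs_le.mpr ⟨this.1, this.2⟩
          have hn' : ∀ i, |v i| ≤ M := by
            intro i
            rw [hvi, abs_div, abs_mul, abs_of_pos hM, Nat.abs_cast, div_le_iff₀ hNR]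
            have : |(n i : ℝ)| ≤ (N:ℝ) := by exact_mod_cast hnb i
            exact mul_le_mul_of_nonneg_left this hM.le
          have hdist : ‖v - y‖ ≤ M * Real.sqrt d / N := by
            rw [EuclideanSpace.norm_eq]
            have hb : ∀ i, ‖(v - y) i‖ ^ 2 ≤ (M / N) ^ 2 := by
              intro i
              rw [hvyi, Real.norm_eq_abs, sq_abs]
              have h2 : M * (n i : ℝ) / N - y i = (M / N) * ((n i : ℝ) - N * y i / M) := by
                field_simp
              have h3 : |M * (n i : ℝ) / N - y i| ≤ M / N := by
                rw [h2, abs_mul, abs_of_pos (div_pos hM hNR)]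
                have h4 : |(n i : ℝ) - N * y i / M| ≤ 1 := by
                  rw [abs_sub_comm]
                  exact (hlt i).le
                nlinarith [div_pos hM hNR]
              nlinarith [abs_nonneg (M * (n i : ℝ) / N - y i),
                le_abs_self (M * (n i : ℝ) / N - y i), neg_abs_le (M * (n i : ℝ) / N - y i)]
            have hsumb : ∑ i, ‖(v - y) i‖ ^ 2 ≤ (d : ℝ) * (M / N) ^ 2 := by
              calc ∑ i, ‖(v - y) i‖ ^ 2 ≤ ∑ _i : Fin d, (M / N) ^ 2 :=
                    Finset.sum_le_sum fun i _ => hb i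
                _ = (d : ℝ) * (M / N) ^ 2 := by
                    rw [Finset.sum_const, Finset.card_univ, Fintype.card_fin, nsmul_eq_mul]
            calc Real.sqrt (∑ i, ‖(v - y) i‖ ^ 2)
                ≤ Real.sqrt ((d : ℝ) * (M / N) ^ 2) := Real.sqrt_le_sqrt hsumb
              _ = Real.sqrt d * (M / N) := by
                  rw [Real.sqrt_mul (Nat.cast_nonneg d), Real.sqrt_sq (div_nonneg hM.le hNR.le)]
              _ = M * Real.sqrt d / N := by ring
          calc ‖g v - g y‖ ≤ Δ ‖v - y‖ := hg v hn' y hy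
            _ ≤ c := hΔmono (Set.mem_Ici.mpr (norm_nonneg _)) (Set.mem_Ici.mpr hcnn) hdist
    _ = c := by rw [← Finset.sum_mul, hsum, one_mul]
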